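/- arXiv:2310.17806 — 2 statements merged into one kernel-verified Lean document; each statement's English description precedes it below -/
import Mathlib

section
/- (Robustness of the doubly robust functional under correct outcome models.) Fix a* ∈ {0,1} and suppose c := μ(A=a*, S=0) > 0 and that every w with μ(W=w) > 0 satisfies μ(W=w, A=1, S=1) > 0 and μ(W=w, A=0, S=1) > 0. Let g*₍a*,0₎, g*₍1,1₎, g*₍0,1₎ : 𝒲 → ℝ be arbitrary functions with g*₍1,1₎ and g*₍0,1₎ strictly positive (possibly misspecified propensity limits). Then, with the TRUE outcome regressions m₁, m₀, E_μ[ 1{A=1,S=1}·g*₍a*,0₎(W)/(c·g*₍1,1₎(W))·(ΔY − m₁(W)) − 1{A=0,S=1}·g*₍a*,0₎(W)/(c·g*₍0,1₎(W))·(ΔY − m₀(W)) + (1{A=a*,S=0}/c)·(m₁(W) − m₀(W)) ] = ψ(a*). -/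
open MeasureTheory ProbabilityTheory
open scoped Classical

noncomputable section

/-- Conditional expectation of `X` given the event `E`. -/
def cexp {Ω : Type*} [MeasurableSpace Ω] (μ : Measure Ω) (X : Ω → ℝ) (E : Set Ω) : ℝ :=
  ∫ ω, X ω ∂(μ[|E])

/-- The event `{W = w, A = a, S = s}`. -/
def evtWAS {Ω 𝒲 : Type*} (W : Ω → 𝒲) (A S : Ω → Bool) (w : 𝒲) (a s : Bool) : Set Ω :=
  {ω | W ω = w ∧ A ω = a ∧ S ω = s}

/-- The event `{A = a, S = s}`. -/
def evtAS {Ω : Type*} (A S : Ω → Bool) (a s : Bool) : Set Ω :=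
  {ω | A ω = a ∧ S ω = s}

/-- The outcome-difference regression `m_a(w) = E[Y₁ - Y₀ | W = w, A = a, S = 1]`. -/
def mfun {Ω 𝒲 : Type*} [MeasurableSpace Ω] (μ : Measure Ω) (W : Ω → 𝒲) (A S : Ω → Bool)
    (Y₀ Y₁ : Ω → ℝ) (a : Bool) (w : 𝒲) : ℝ :=
  cexp μ (fun ω => Y₁ ω - Y₀ ω) (evtWAS W A S w a true)

/-- The true propensity `g_{a,s}(w) = μ({A = a, S = s} | {W = w})`. -/
def gprop {Ω 𝒲 : Type*} [MeasurableSpace Ω] (μ : Measure Ω) (W : Ω → 𝒲) (A S : Ω → Bool)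
    (a s : Bool) (w : 𝒲) : ℝ :=
  ((μ[|{ω | W ω = w}]) {ω | A ω = a ∧ S ω = s}).toReal

/-- The target statistical parameter `ψ(a*) = E[m₁(W) − m₀(W) | A = a*, S = 0]`. -/
def psiParam {Ω 𝒲 : Type*} [MeasurableSpace Ω] (μ : Measure Ω) (W : Ω → 𝒲) (A S : Ω → Bool)
    (Y₀ Y₁ : Ω → ℝ) (astar : Bool) : ℝ :=
  cexp μ (fun ω => mfun μ W A S Y₀ Y₁ true (W ω) - mfun μ W A S Y₀ Y₁ false (W ω))
    (evtAS A S astar false)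

lemma cexp_eq' {Ω : Type*} [MeasurableSpace Ω] (μ : Measure Ω) (X : Ω → ℝ) (E : Set Ω) :
    cexp μ X E = (μ E).toReal⁻¹ * ∫ ω in E, X ω ∂μ := by
  rw [cexp, ProbabilityTheory.cond, integral_smul_measure]
  simp [ENNReal.toReal_inv]

lemma setIntegral_sub_cexp' {Ω : Type*} [MeasurableSpace Ω] (μ : Measure Ω) [IsFiniteMeasure μ]
    {X : Ω → ℝ} (hX : Integrable X μ) (E : Set Ω) :
    ∫ ω in E, (X ω - cexp μ X E) ∂μ = 0 := by
  by_cases h0 : μ E = 0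
  · rw [Measure.restrict_eq_zero.mpr h0]; simp
  · have ht : (μ E).toReal ≠ 0 := ENNReal.toReal_ne_zero.mpr ⟨h0, measure_ne_top μ E⟩
    rw [integral_sub hX.restrict (integrable_const _), setIntegral_const, cexp_eq',
      smul_eq_mul]
    field_simp
    simp [Measure.real]

lemma evtWAS_meas' {Ω 𝒲 : Type*} [MeasurableSpace Ω] [MeasurableSpace 𝒲]
    [MeasurableSingletonClass 𝒲] {W : Ω → 𝒲} {A S : Ω → Bool}
    (hW : Measurable W) (hA : Measurable A) (hS : Measurable S) (w : 𝒲) (a s : Bool) :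
    MeasurableSet (evtWAS W A S w a s) := by
  have : evtWAS W A S w a s = W ⁻¹' {w} ∩ (A ⁻¹' {a} ∩ S ⁻¹' {s}) := by
    ext ω
    simp [evtWAS, Set.mem_setOf_eq, Set.mem_inter_iff, Set.mem_preimage,
      Set.mem_singleton_iff, and_assoc]
  rw [this]
  exact (hW (measurableSet_singleton w)).inter
    ((hA (measurableSet_singleton a)).inter (hS (measurableSet_singleton s)))

lemma evtAS_meas' {Ω : Type*} [MeasurableSpace Ω] {A S : Ω → Bool}
    (hA : Measurable A) (hS : Measurable S) (a s : Bool) :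
    MeasurableSet (evtAS A S a s) := by
  have : evtAS A S a s = A ⁻¹' {a} ∩ S ⁻¹' {s} := by
    ext ω
    simp [evtAS, Set.mem_setOf_eq, Set.mem_inter_iff, Set.mem_preimage, Set.mem_singleton_iff]
  rw [this]
  exact (hA (measurableSet_singleton a)).inter (hS (measurableSet_singleton s))

lemma repack' {Ω 𝒲 : Type*} [Fintype 𝒲] (W : Ω → 𝒲) (A S : Ω → Bool) (a s : Bool)
    (φ : 𝒲 → Ω → ℝ) (ω : Ω) :
    (if A ω = a ∧ S ω = s then φ (W ω) ω else 0)
    = ∑ w, Set.indicator (evtWAS W A S w a s) (φ w) ω := by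
  by_cases h : A ω = a ∧ S ω = s
  · simp only [h, if_true, Set.indicator, evtWAS, Set.mem_setOf_eq, h.1, h.2, and_true]
    rw [Finset.sum_ite_eq]
    simp
  · simp only [h, if_false, Set.indicator, evtWAS, Set.mem_setOf_eq]
    refine (Finset.sum_eq_zero fun w _ => ?_).symm
    have : ¬(W ω = w ∧ A ω = a ∧ S ω = s) := fun hh => h hh.2
    simp [this]

/-- Integrability of outcome-model residual pieces. -/
lemma piece_integrable {Ω : Type*} [MeasurableSpace Ω] (μ : Measure Ω) [IsProbabilityMeasure μ]
    {𝒲 : Type*} [Fintype 𝒲] [MeasurableSpace 𝒲] [MeasurableSingletonClass 𝒲]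
    (S A : Ω → Bool) (W : Ω → 𝒲) (Y₀ Y₁ : Ω → ℝ)
    (hS : Measurable S) (hA : Measurable A) (hW : Measurable W)
    (hY₀ : Integrable Y₀ μ) (hY₁ : Integrable Y₁ μ) (k : 𝒲 → ℝ) (a : Bool) :
    Integrable (fun ω => if A ω = a ∧ S ω = true then
      k (W ω) * ((Y₁ ω - Y₀ ω) - mfun μ W A S Y₀ Y₁ a (W ω)) else 0) μ := by
  have hrw : (fun ω => if A ω = a ∧ S ω = true then
      k (W ω) * ((Y₁ ω - Y₀ ω) - mfun μ W A S Y₀ Y₁ a (W ω)) else 0)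
      = fun ω => ∑ w, Set.indicator (evtWAS W A S w a true)
          (fun ω => k w * ((Y₁ ω - Y₀ ω) - mfun μ W A S Y₀ Y₁ a w)) ω :=
    funext fun ω => repack' W A S a true
      (fun w ω => k w * ((Y₁ ω - Y₀ ω) - mfun μ W A S Y₀ Y₁ a w)) ω
  rw [hrw]
  exact integrable_finset_sum _ fun w _ =>
    (((hY₁.sub hY₀).sub (integrable_const _)).const_mul _).indicator
      (evtWAS_meas' hW hA hS w a true)

/-- Each residual piece integrates to zero when the outcome model is the true one. -/
lemma piece_zero {Ω : Type*} [MeasurableSpace Ω] (μ : Measure Ω) [IsProbabilityMeasure μ]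
    {𝒲 : Type*} [Fintype 𝒲] [MeasurableSpace 𝒲] [MeasurableSingletonClass 𝒲]
    (S A : Ω → Bool) (W : Ω → 𝒲) (Y₀ Y₁ : Ω → ℝ)
    (hS : Measurable S) (hA : Measurable A) (hW : Measurable W)
    (hY₀ : Integrable Y₀ μ) (hY₁ : Integrable Y₁ μ) (k : 𝒲 → ℝ) (a : Bool) :
    ∫ ω, (if A ω = a ∧ S ω = true then
      k (W ω) * ((Y₁ ω - Y₀ ω) - mfun μ W A S Y₀ Y₁ a (W ω)) else 0) ∂μ = 0 := by
  have hrw : (fun ω => if A ω = a ∧ S ω = true then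
      k (W ω) * ((Y₁ ω - Y₀ ω) - mfun μ W A S Y₀ Y₁ a (W ω)) else 0)
      = fun ω => ∑ w, Set.indicator (evtWAS W A S w a true)
          (fun ω => k w * ((Y₁ ω - Y₀ ω) - mfun μ W A S Y₀ Y₁ a w)) ω :=
    funext fun ω => repack' W A S a true
      (fun w ω => k w * ((Y₁ ω - Y₀ ω) - mfun μ W A S Y₀ Y₁ a w)) ω
  have hint : ∀ w ∈ (Finset.univ : Finset 𝒲), Integrable
      (fun ω => Set.indicator (evtWAS W A S w a true)
        (fun ω => k w * ((Y₁ ω - Y₀ ω) - mfun μ W A S Y₀ Y₁ a w)) ω) μ := fun w _ =>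
    (((hY₁.sub hY₀).sub (integrable_const _)).const_mul _).indicator
      (evtWAS_meas' hW hA hS w a true)
  rw [hrw, integral_finset_sum _ hint]
  refine Finset.sum_eq_zero fun w _ => ?_
  rw [integral_indicator (evtWAS_meas' hW hA hS w a true), integral_const_mul]
  have hz : ∫ ω in evtWAS W A S w a true,
      ((Y₁ ω - Y₀ ω) - mfun μ W A S Y₀ Y₁ a w) ∂μ = 0 :=
    setIntegral_sub_cexp' μ (hY₁.sub hY₀) (evtWAS W A S w a true)
  rw [hz, mul_zero]

/-- the doubly robust functional recovers `ψ(a*)` when the outcome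
regressions are correct, for arbitrary (possibly misspecified) propensity limits. -/
theorem dr_functional_correct_outcome_models
    {Ω : Type*} [MeasurableSpace Ω] (μ : Measure Ω) [IsProbabilityMeasure μ]
    {𝒲 : Type*} [Fintype 𝒲] [MeasurableSpace 𝒲] [MeasurableSingletonClass 𝒲]
    (S A : Ω → Bool) (W : Ω → 𝒲) (Y₀ Y₁ : Ω → ℝ)
    (hS : Measurable S) (hA : Measurable A) (hW : Measurable W)
    (hY₀ : Integrable Y₀ μ) (hY₁ : Integrable Y₁ μ)
    (astar : Bool)
    (hc : 0 < μ (evtAS A S astar false))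
    (hpos : ∀ w : 𝒲, 0 < μ {ω | W ω = w} →
      0 < μ (evtWAS W A S w true true) ∧ 0 < μ (evtWAS W A S w false true))
    (gstar_a0 gstar11 gstar01 : 𝒲 → ℝ)
    (hg11 : ∀ w, 0 < gstar11 w) (hg01 : ∀ w, 0 < gstar01 w) :
    ∫ ω,
      ((if A ω = true ∧ S ω = true then
          gstar_a0 (W ω) / ((μ (evtAS A S astar false)).toReal * gstar11 (W ω))
            * ((Y₁ ω - Y₀ ω) - mfun μ W A S Y₀ Y₁ true (W ω))
        else 0)
      - (if A ω = false ∧ S ω = true then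
          gstar_a0 (W ω) / ((μ (evtAS A S astar false)).toReal * gstar01 (W ω))
            * ((Y₁ ω - Y₀ ω) - mfun μ W A S Y₀ Y₁ false (W ω))
        else 0)
      + (if A ω = astar ∧ S ω = false then
          (1 / (μ (evtAS A S astar false)).toReal)
            * (mfun μ W A S Y₀ Y₁ true (W ω) - mfun μ W A S Y₀ Y₁ false (W ω))
        else 0)) ∂μ
    = psiParam μ W A S Y₀ Y₁ astar := by
  set c : ℝ := (μ (evtAS A S astar false)).toReal with hcdef
  -- integrability of the first two pieces
  have hint1 : Integrable (fun ω => if A ω = true ∧ S ω = true then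
      gstar_a0 (W ω) / (c * gstar11 (W ω))
        * ((Y₁ ω - Y₀ ω) - mfun μ W A S Y₀ Y₁ true (W ω)) else 0) μ :=
    piece_integrable μ S A W Y₀ Y₁ hS hA hW hY₀ hY₁
      (fun w => gstar_a0 w / (c * gstar11 w)) true
  have hint0 : Integrable (fun ω => if A ω = false ∧ S ω = true then
      gstar_a0 (W ω) / (c * gstar01 (W ω))
        * ((Y₁ ω - Y₀ ω) - mfun μ W A S Y₀ Y₁ false (W ω)) else 0) μ :=
    piece_integrable μ S A W Y₀ Y₁ hS hA hW hY₀ hY₁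
      (fun w => gstar_a0 w / (c * gstar01 w)) false
  -- the third piece as an indicator
  have hrep2 : (fun ω => if A ω = astar ∧ S ω = false then
      (1 / c) * (mfun μ W A S Y₀ Y₁ true (W ω) - mfun μ W A S Y₀ Y₁ false (W ω)) else 0)
      = fun ω => Set.indicator (evtAS A S astar false)
          (fun ω => (1 / c) * (mfun μ W A S Y₀ Y₁ true (W ω)
            - mfun μ W A S Y₀ Y₁ false (W ω))) ω := by
    funext ω
    by_cases h : A ω = astar ∧ S ω = false <;>
      simp [Set.indicator, evtAS, Set.mem_setOf_eq, h]
  have hmW : Integrable (fun ω => (1 / c) * (mfun μ W A S Y₀ Y₁ true (W ω)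
      - mfun μ W A S Y₀ Y₁ false (W ω))) μ := by
    have hrw : (fun ω => (1 / c) * (mfun μ W A S Y₀ Y₁ true (W ω)
        - mfun μ W A S Y₀ Y₁ false (W ω)))
        = fun ω => ∑ w, Set.indicator (W ⁻¹' {w}) (fun _ =>
            (1 / c) * (mfun μ W A S Y₀ Y₁ true w - mfun μ W A S Y₀ Y₁ false w)) ω := by
      funext ω
      rw [Finset.sum_eq_single (W ω)]
      · simp [Set.indicator]
      · intro w _ hw
        simp [Set.indicator, Set.mem_preimage, Set.mem_singleton_iff, Ne.symm hw]
      · intro h; exact absurd (Finset.mem_univ _) h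
    rw [hrw]
    exact integrable_finset_sum _ fun w _ =>
      (integrable_const _).indicator (hW (measurableSet_singleton w))
  have hint2 : Integrable (fun ω => if A ω = astar ∧ S ω = false then
      (1 / c) * (mfun μ W A S Y₀ Y₁ true (W ω) - mfun μ W A S Y₀ Y₁ false (W ω)) else 0) μ := by
    rw [hrep2]
    exact hmW.indicator (evtAS_meas' hA hS astar false)
  -- split the integral
  have hadd := integral_add (μ := μ) (hint1.sub hint0) hint2
  have hsub := integral_sub (μ := μ) hint1 hint0
  simp only [Pi.add_apply, Pi.sub_apply] at hadd hsub
  rw [hadd, hsub,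
    piece_zero μ S A W Y₀ Y₁ hS hA hW hY₀ hY₁ (fun w => gstar_a0 w / (c * gstar11 w)) true,
    piece_zero μ S A W Y₀ Y₁ hS hA hW hY₀ hY₁ (fun w => gstar_a0 w / (c * gstar01 w)) false]
  -- compute the third integral
  have h3 : ∫ ω, (if A ω = astar ∧ S ω = false then
      (1 / c) * (mfun μ W A S Y₀ Y₁ true (W ω) - mfun μ W A S Y₀ Y₁ false (W ω)) else 0) ∂μ
      = psiParam μ W A S Y₀ Y₁ astar := by
    rw [hrep2, integral_indicator (evtAS_meas' hA hS astar false), integral_const_mul]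
    rw [psiParam, cexp_eq', ← hcdef, one_div]
  rw [h3]
  ring
end
end

section
/- (Population validity of inverse-odds weighting.) Fix a* ∈ {0,1} and suppose c := μ(A=a*, S=0) > 0 and that every w with μ(W=w) > 0 satisfies μ(W=w, A=1, S=1) > 0 and μ(W=w, A=0, S=1) > 0. Then, with the true propensities, E_μ[ ( 1{A=1,S=1}·g₍a*,0₎(W)/(c·g₍1,1₎(W)) − 1{A=0,S=1}·g₍a*,0₎(W)/(c·g₍0,1₎(W)) )·ΔY ] = ψ(a*). -/
open MeasureTheory ProbabilityTheory
open scoped Classical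

noncomputable section

lemma setIntegral_eq_cexp {Ω : Type*} [MeasurableSpace Ω] (μ : Measure Ω) [IsProbabilityMeasure μ]
    (X : Ω → ℝ) (E : Set Ω) :
    ∫ ω in E, X ω ∂μ = (μ E).toReal * cexp μ X E := by
  unfold cexp
  rw [ProbabilityTheory.cond, integral_smul_measure, smul_eq_mul, ENNReal.toReal_inv]
  rcases eq_or_ne (μ E) 0 with h | h
  · rw [Measure.restrict_eq_zero.mpr h]; simp
  · rw [← mul_assoc, mul_inv_cancel₀ (ENNReal.toReal_ne_zero.mpr ⟨h, measure_ne_top μ E⟩), one_mul]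

lemma gprop_eq {Ω 𝒲 : Type*} [MeasurableSpace Ω] [MeasurableSpace 𝒲]
    [MeasurableSingletonClass 𝒲]
    (μ : Measure Ω) (W : Ω → 𝒲) (A S : Ω → Bool) (hW : Measurable W) (a s : Bool) (w : 𝒲) :
    gprop μ W A S a s w
      = (μ (evtWAS W A S w a s)).toReal / (μ {ω | W ω = w}).toReal := by
  unfold gprop
  rw [ProbabilityTheory.cond_apply
      (show MeasurableSet {ω | W ω = w} from hW (measurableSet_singleton w))]
  rw [ENNReal.toReal_mul, ENNReal.toReal_inv, inv_mul_eq_div]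
  rw [show {ω | W ω = w} ∩ {ω | A ω = a ∧ S ω = s} = evtWAS W A S w a s from rfl]

/-- population validity of the inverse-odds weighting functional with the
true propensities. -/
theorem iow_functional_valid
    {Ω : Type*} [MeasurableSpace Ω] (μ : Measure Ω) [IsProbabilityMeasure μ]
    {𝒲 : Type*} [Fintype 𝒲] [MeasurableSpace 𝒲] [MeasurableSingletonClass 𝒲]
    (S A : Ω → Bool) (W : Ω → 𝒲) (Y₀ Y₁ : Ω → ℝ)
    (hS : Measurable S) (hA : Measurable A) (hW : Measurable W)
    (hY₀ : Integrable Y₀ μ) (hY₁ : Integrable Y₁ μ)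
    (astar : Bool)
    (hc : 0 < μ (evtAS A S astar false))
    (hpos : ∀ w : 𝒲, 0 < μ {ω | W ω = w} →
      0 < μ (evtWAS W A S w true true) ∧ 0 < μ (evtWAS W A S w false true)) :
    ∫ ω,
      ((if A ω = true ∧ S ω = true then
          gprop μ W A S astar false (W ω)
            / ((μ (evtAS A S astar false)).toReal * gprop μ W A S true true (W ω))
        else 0)
      - (if A ω = false ∧ S ω = true then
          gprop μ W A S astar false (W ω)
            / ((μ (evtAS A S astar false)).toReal * gprop μ W A S false true (W ω))
        else 0)) * (Y₁ ω - Y₀ ω) ∂μ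
    = psiParam μ W A S Y₀ Y₁ astar := by
  classical
  set c : ℝ := (μ (evtAS A S astar false)).toReal with hcdef
  have hcpos : 0 < c := ENNReal.toReal_pos hc.ne' (measure_ne_top _ _)
  have hΔ : Integrable (fun ω => Y₁ ω - Y₀ ω) μ := hY₁.sub hY₀
  have hWw : ∀ w : 𝒲, MeasurableSet {ω | W ω = w} :=
    fun w => hW (measurableSet_singleton w)
  have hE : ∀ (w : 𝒲) (a s : Bool), MeasurableSet (evtWAS W A S w a s) := by
    intro w a s
    have h1 : evtWAS W A S w a s = W ⁻¹' {w} ∩ (A ⁻¹' {a} ∩ S ⁻¹' {s}) := by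
      ext ω; simp [evtWAS, and_assoc]
    rw [h1]
    exact (hW (measurableSet_singleton w)).inter
      ((hA (measurableSet_singleton a)).inter (hS (measurableSet_singleton s)))
  -- key algebraic identity
  have key : ∀ (a : Bool) (w : 𝒲),
      gprop μ W A S astar false w / (c * gprop μ W A S a true w)
        * (μ (evtWAS W A S w a true)).toReal
      = (μ (evtWAS W A S w astar false)).toReal / c := by
    intro a w
    rcases (show 0 ≤ μ {ω | W ω = w} from zero_le).eq_or_lt with hw | hw
    · have hsub : ∀ (a' s' : Bool), μ (evtWAS W A S w a' s') = 0 := fun a' s' =>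
        measure_mono_null (fun ω hω => hω.1) hw.symm
      rw [hsub a true, hsub astar false]; simp
    · have hx : (0:ℝ) < (μ {ω | W ω = w}).toReal :=
        ENNReal.toReal_pos hw.ne' (measure_ne_top _ _)
      have hEa : 0 < μ (evtWAS W A S w a true) := by
        rcases hpos w hw with ⟨h1, h0⟩
        cases a
        · exact h0
        · exact h1
      have he : (0:ℝ) < (μ (evtWAS W A S w a true)).toReal :=
        ENNReal.toReal_pos hEa.ne' (measure_ne_top _ _)
      rw [gprop_eq μ W A S hW astar false w, gprop_eq μ W A S hW a true w]
      field_simp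
  -- abbreviations
  have hm : ∀ (a : Bool) (w : 𝒲),
      mfun μ W A S Y₀ Y₁ a w = cexp μ (fun ω => Y₁ ω - Y₀ ω) (evtWAS W A S w a true) :=
    fun _ _ => rfl
  -- the target sum
  set Tgt : ℝ := ∑ w : 𝒲, ((μ (evtWAS W A S w astar false)).toReal / c)
      * (mfun μ W A S Y₀ Y₁ true w - mfun μ W A S Y₀ Y₁ false w) with hTgt
  -- RHS computation
  have hRHS : psiParam μ W A S Y₀ Y₁ astar = Tgt := by
    have hint := setIntegral_eq_cexp μ
      (fun ω => mfun μ W A S Y₀ Y₁ true (W ω) - mfun μ W A S Y₀ Y₁ false (W ω))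
      (evtAS A S astar false)
    have hpt : ∀ ω : Ω,
        mfun μ W A S Y₀ Y₁ true (W ω) - mfun μ W A S Y₀ Y₁ false (W ω)
        = ∑ w : 𝒲, Set.indicator {ω' | W ω' = w}
            (fun _ => mfun μ W A S Y₀ Y₁ true w - mfun μ W A S Y₀ Y₁ false w) ω := by
      intro ω
      rw [Finset.sum_eq_single (W ω)]
      · simp [Set.indicator_apply]
      · intro b _ hb
        simp [Set.indicator_apply, Ne.symm hb]
      · intro h; exact absurd (Finset.mem_univ _) h
    have hsum : (∫ ω in evtAS A S astar false,
          (mfun μ W A S Y₀ Y₁ true (W ω) - mfun μ W A S Y₀ Y₁ false (W ω)) ∂μ)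
        = ∑ w : 𝒲, (mfun μ W A S Y₀ Y₁ true w - mfun μ W A S Y₀ Y₁ false w)
            * (μ (evtWAS W A S w astar false)).toReal := by
      calc (∫ ω in evtAS A S astar false,
              (mfun μ W A S Y₀ Y₁ true (W ω) - mfun μ W A S Y₀ Y₁ false (W ω)) ∂μ)
          = ∫ ω in evtAS A S astar false, (∑ w : 𝒲, Set.indicator {ω' | W ω' = w}
              (fun _ => mfun μ W A S Y₀ Y₁ true w - mfun μ W A S Y₀ Y₁ false w) ω) ∂μ :=
            integral_congr_ae (Filter.Eventually.of_forall hpt)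
        _ = ∑ w : 𝒲, ∫ ω in evtAS A S astar false, Set.indicator {ω' | W ω' = w}
              (fun _ => mfun μ W A S Y₀ Y₁ true w - mfun μ W A S Y₀ Y₁ false w) ω ∂μ :=
            integral_finset_sum _ (fun w _ => (integrable_const _).indicator (hWw w))
        _ = ∑ w : 𝒲, (mfun μ W A S Y₀ Y₁ true w - mfun μ W A S Y₀ Y₁ false w)
              * (μ (evtWAS W A S w astar false)).toReal := by
            refine Finset.sum_congr rfl fun w _ => ?_
            rw [integral_indicator (hWw w), setIntegral_const, measureReal_restrict_apply (hWw w)]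
            rw [smul_eq_mul, mul_comm]
            rfl
    have : c * psiParam μ W A S Y₀ Y₁ astar = c * Tgt := by
      rw [show psiParam μ W A S Y₀ Y₁ astar
          = cexp μ (fun ω => mfun μ W A S Y₀ Y₁ true (W ω) - mfun μ W A S Y₀ Y₁ false (W ω))
            (evtAS A S astar false) from rfl, ← hint, hsum, hTgt, Finset.mul_sum]
      refine Finset.sum_congr rfl fun w _ => ?_
      field_simp
    exact mul_left_cancel₀ hcpos.ne' this
  rw [hRHS]
  -- LHS computation
  have hpt2 : ∀ ω : Ω,
      ((if A ω = true ∧ S ω = true then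
          gprop μ W A S astar false (W ω) / (c * gprop μ W A S true true (W ω))
        else 0)
      - (if A ω = false ∧ S ω = true then
          gprop μ W A S astar false (W ω) / (c * gprop μ W A S false true (W ω))
        else 0)) * (Y₁ ω - Y₀ ω)
      = ∑ w : 𝒲,
          (gprop μ W A S astar false w / (c * gprop μ W A S true true w)
            * (evtWAS W A S w true true).indicator (fun ω' => Y₁ ω' - Y₀ ω') ω
          - gprop μ W A S astar false w / (c * gprop μ W A S false true w)
            * (evtWAS W A S w false true).indicator (fun ω' => Y₁ ω' - Y₀ ω') ω) := by
    intro ω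
    rw [Finset.sum_eq_single (W ω)]
    · by_cases h1 : A ω = true <;> by_cases h2 : S ω = true <;>
        simp [Set.indicator_apply, evtWAS, h1, h2]
    · intro b _ hb
      simp [Set.indicator_apply, evtWAS, Ne.symm hb]
    · intro h; exact absurd (Finset.mem_univ _) h
  calc (∫ ω,
      ((if A ω = true ∧ S ω = true then
          gprop μ W A S astar false (W ω) / (c * gprop μ W A S true true (W ω))
        else 0)
      - (if A ω = false ∧ S ω = true then
          gprop μ W A S astar false (W ω) / (c * gprop μ W A S false true (W ω))
        else 0)) * (Y₁ ω - Y₀ ω) ∂μ)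
      = ∫ ω, (∑ w : 𝒲,
          (gprop μ W A S astar false w / (c * gprop μ W A S true true w)
            * (evtWAS W A S w true true).indicator (fun ω' => Y₁ ω' - Y₀ ω') ω
          - gprop μ W A S astar false w / (c * gprop μ W A S false true w)
            * (evtWAS W A S w false true).indicator (fun ω' => Y₁ ω' - Y₀ ω') ω)) ∂μ :=
        integral_congr_ae (Filter.Eventually.of_forall hpt2)
    _ = ∑ w : 𝒲, ∫ ω,
          (gprop μ W A S astar false w / (c * gprop μ W A S true true w)
            * (evtWAS W A S w true true).indicator (fun ω' => Y₁ ω' - Y₀ ω') ω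
          - gprop μ W A S astar false w / (c * gprop μ W A S false true w)
            * (evtWAS W A S w false true).indicator (fun ω' => Y₁ ω' - Y₀ ω') ω) ∂μ :=
        integral_finset_sum _ (fun w _ =>
          ((hΔ.indicator (hE w true true)).const_mul _).sub
            ((hΔ.indicator (hE w false true)).const_mul _))
    _ = Tgt := by
        rw [hTgt]
        refine Finset.sum_congr rfl fun w _ => ?_
        rw [integral_sub ((hΔ.indicator (hE w true true)).const_mul _)
            ((hΔ.indicator (hE w false true)).const_mul _),
          integral_const_mul, integral_const_mul,
          integral_indicator (hE w true true), integral_indicator (hE w false true),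
          setIntegral_eq_cexp μ _ _, setIntegral_eq_cexp μ _ _,
          hm true w, hm false w]
        have e1 := key true w
        have e0 := key false w
        linear_combination (cexp μ (fun ω => Y₁ ω - Y₀ ω) (evtWAS W A S w true true)) * e1
          - (cexp μ (fun ω => Y₁ ω - Y₀ ω) (evtWAS W A S w false true)) * e0
end
end
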